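/- For every even n ≥ 4 there exists a set of n points in ℝ³ of diameter 1, all lying on a common 2-sphere, with exactly 2n − 2 pairs at distance 1. -/

import Mathlib

open Real Finset

noncomputable def upC (m : ℕ) : ℝ := Real.cos (π / (2*m))
noncomputable def upR (m : ℕ) : ℝ := 1 / (2 * upC m)
noncomputable def upH (m : ℕ) : ℝ := Real.sqrt (1 - upR m ^ 2)
noncomputable def upV (m : ℕ) (k : ZMod m) : EuclideanSpace ℝ (Fin 3) :=
  !₂[upR m * Real.cos (2*π*k.val/m), upR m * Real.sin (2*π*k.val/m), 0]
noncomputable def upA (m : ℕ) : EuclideanSpace ℝ (Fin 3) := !₂[0,0,upH m]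
noncomputable def upQ (m : ℕ) : Option (ZMod m) → EuclideanSpace ℝ (Fin 3)
  | none => upA m
  | some k => upV m k

lemma upC_gt (m : ℕ) (hm : 3 ≤ m) : 1/2 < upC m := by
  have h1 : (0:ℝ) < m := by positivity
  have h2 : π / (2*m) < π / 3 := by
    apply div_lt_div_of_pos_left pi_pos (by norm_num)
    have : (3:ℝ) ≤ m := by exact_mod_cast hm
    linarith
  calc (1:ℝ)/2 = Real.cos (π/3) := by rw [Real.cos_pi_div_three]
  _ < upC m := by
      apply Real.strictAntiOn_cos ⟨by positivity, by linarith [pi_pos]⟩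
        ⟨by positivity, by linarith [pi_pos]⟩ h2

lemma two_upC_sq (m : ℕ) (hm : 3 ≤ m) : 2 * upC m ^ 2 = 1 + Real.cos (π / m) := by
  have hm0 : (m:ℝ) ≠ 0 := by positivity
  have : π / m = 2 * (π / (2*m)) := by field_simp
  rw [upC, this, Real.cos_two_mul]; ring

lemma upR_pos (m : ℕ) (hm : 3 ≤ m) : 0 < upR m := by
  have := upC_gt m hm; rw [upR]; positivity

lemma upR_lt_one (m : ℕ) (hm : 3 ≤ m) : upR m < 1 := by
  have h := upC_gt m hm
  rw [upR, div_lt_one (by linarith)]; linarith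

lemma upH_pos (m : ℕ) (hm : 3 ≤ m) : 0 < upH m := by
  have h1 := upR_pos m hm; have h2 := upR_lt_one m hm
  rw [upH]; apply Real.sqrt_pos.2; nlinarith

lemma upH_sq (m : ℕ) (hm : 3 ≤ m) : upH m ^ 2 = 1 - upR m ^ 2 := by
  have h1 := upR_pos m hm; have h2 := upR_lt_one m hm
  rw [upH, Real.sq_sqrt (by nlinarith)]

lemma eq_one_of_sq {x : ℝ} (hx : 0 ≤ x) (h : x^2 = 1) : x = 1 := by
  calc x = Real.sqrt (x^2) := (Real.sqrt_sq hx).symm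
  _ = 1 := by rw [h]; simp

lemma dist_upV_raw (m : ℕ) (j k : ZMod m) :
    dist (upV m j) (upV m k) ^ 2
      = 2 * upR m ^ 2 * (1 - Real.cos (2*π*j.val/m - 2*π*k.val/m)) := by
  rw [EuclideanSpace.dist_eq, Real.sq_sqrt (by positivity)]
  simp only [Fin.sum_univ_three, upV, Real.dist_eq, sq_abs, Matrix.cons_val_zero,
    Matrix.cons_val_one, Matrix.head_cons, Matrix.cons_val_two, Matrix.tail_cons, PiLp.toLp_apply]
  have h := Real.cos_sub (2*π*j.val/m) (2*π*k.val/m)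
  have h1 := Real.sin_sq_add_cos_sq (2*π*j.val/m)
  have h2 := Real.sin_sq_add_cos_sq (2*π*k.val/m)
  nlinarith [h, h1, h2]

lemma cos_upV (m : ℕ) [NeZero m] (j k : ZMod m) :
    Real.cos (2*π*j.val/m - 2*π*k.val/m) = Real.cos (2*π*((j-k).val)/m) := by
  have hm0 : (m:ℝ) ≠ 0 := Nat.cast_ne_zero.2 (NeZero.ne m)
  obtain ⟨t, ht⟩ : (m:ℤ) ∣ ((j.val : ℤ) - k.val - (j-k).val) := by
    have : (((j.val : ℤ) - k.val - (j-k).val : ℤ) : ZMod m) = 0 := by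
      push_cast
      simp [ZMod.natCast_val, ZMod.cast_id]
    exact (ZMod.intCast_zmod_eq_zero_iff_dvd _ m).1 this
  have ht' : (j.val : ℝ) - k.val - (j-k).val = m * t := by exact_mod_cast ht
  have h4 : 2*π*(((j-k).val):ℝ)/m + t*(2*π) = (2*π*((j-k).val) + t*(2*π)*m)/m := by
    rw [add_div, mul_div_cancel_right₀ _ hm0]
  have : 2*π*j.val/m - 2*π*k.val/m = 2*π*((j-k).val)/m + t * (2*π) := by
    rw [div_sub_div_same, h4]
    congr 1
    linear_combination (2*π) * ht'
  rw [this, Real.cos_add_int_mul_two_pi]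

lemma cos_char (m r : ℕ) (hm : 3 ≤ m) (hodd : Odd m) (hr : r < m) :
    (Real.cos (2*π*r/m) = -Real.cos (π/m) ↔ (2*r+1 = m ∨ 2*r = m+1))
    ∧ -Real.cos (π/m) ≤ Real.cos (2*π*r/m)
    ∧ (1 ≤ r → Real.cos (2*π*r/m) < 1) := by
  have hm0 : (0:ℝ) < m := by positivity
  obtain ⟨d, hd⟩ : ∃ d : ℤ, d = (m:ℤ) - 2*r := ⟨_, rfl⟩
  obtain ⟨a, hcase⟩ : ∃ a : ℕ, d = (a:ℤ) ∨ d = -(a:ℤ) := ⟨d.natAbs, Int.natAbs_eq d⟩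
  have hdne : d ≠ 0 := by rcases hodd with ⟨t, ht⟩; omega
  have ha1 : 1 ≤ a := by rcases hcase with h|h <;> omega
  have ham : a ≤ m := by rcases hcase with h|h <;> omega
  have ha1' : (1:ℝ) ≤ (a:ℝ) := by exact_mod_cast ha1
  have ham' : ((a:ℝ)) ≤ m := by exact_mod_cast ham
  have hx : 2*π*r/m = π - π*d/m := by
    rw [hd]; push_cast; field_simp; ring
  have hcd : Real.cos (π*(a:ℝ)/m) = Real.cos (π*d/m) := by
    rcases hcase with h|h <;> rw [h] <;> push_cast
    · rfl
    · rw [show π*(-(a:ℝ))/m = -(π*(a:ℝ)/m) by ring, Real.cos_neg]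
  have hcos : Real.cos (2*π*r/m) = -Real.cos (π*(a:ℝ)/m) := by
    rw [hx, Real.cos_pi_sub, hcd]
  have hA1 : π/m ≤ π*(a:ℝ)/m := by
    rw [div_le_div_iff₀ hm0 hm0]; nlinarith [mul_pos pi_pos hm0]
  have hA2 : π*(a:ℝ)/m ≤ π := by
    rw [div_le_iff₀ hm0]; nlinarith [pi_pos]
  have hpm0 : 0 ≤ π/m := by positivity
  have hpmpi : π/m ≤ π := by rw [div_le_iff₀ hm0]; nlinarith [pi_pos]
  refine ⟨?_, ?_, ?_⟩
  · rw [hcos, neg_inj]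
    constructor
    · intro h
      have heq := Real.injOn_cos ⟨by positivity, hA2⟩ ⟨hpm0, hpmpi⟩ h
      rw [div_eq_div_iff hm0.ne' hm0.ne'] at heq
      have : (a:ℝ) = 1 := by nlinarith [mul_pos pi_pos hm0]
      have : a = 1 := by exact_mod_cast this
      rcases hcase with h'|h' <;> omega
    · intro h
      have : a = 1 := by rcases hcase with h'|h' <;> omega
      rw [this]; norm_num
  · rw [hcos, neg_le]
    linarith [Real.cos_le_cos_of_nonneg_of_le_pi hpm0 hA2 hA1]
  · intro hr1
    have ham2 : a < m := by rcases hodd with ⟨t, ht⟩; rcases hcase with h'|h' <;> omega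
    have hA2' : π*(a:ℝ)/m < π := by
      rw [div_lt_iff₀ hm0]
      have : ((a:ℝ)) < m := by exact_mod_cast ham2
      nlinarith [pi_pos]
    have hlt : Real.cos π < Real.cos (π*(a:ℝ)/m) :=
      Real.strictAntiOn_cos ⟨by positivity, le_of_lt hA2'⟩ ⟨pi_pos.le.trans (le_refl π), le_refl π⟩ hA2'
    rw [Real.cos_pi] at hlt
    rw [hcos]; linarith

section Main
variable (m : ℕ) [NeZero m]

lemma denom_pos (hm : 3 ≤ m) : 0 < 1 + Real.cos (π/m) := by
  rw [← two_upC_sq m hm]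
  have := upC_gt m hm; positivity

lemma dist_upV_sq (hm : 3 ≤ m) (j k : ZMod m) :
    dist (upV m j) (upV m k) ^ 2
      = (1 - Real.cos (2*π*((j-k).val)/m)) / (1 + Real.cos (π/m)) := by
  rw [dist_upV_raw, cos_upV, ← two_upC_sq m hm]
  have hc := upC_gt m hm
  rw [upR]
  field_simp

lemma dist_upV_le (hm : 3 ≤ m) (hodd : Odd m) (j k : ZMod m) : dist (upV m j) (upV m k) ≤ 1 := by
  have h2 := (cos_char m ((j-k).val) hm hodd (ZMod.val_lt _)).2.1
  have hd := dist_upV_sq m hm j k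
  have hp := denom_pos m hm
  have : dist (upV m j) (upV m k) ^ 2 ≤ 1 := by
    rw [hd, div_le_one hp]; linarith
  nlinarith [dist_nonneg (x := upV m j) (y := upV m k)]

lemma dist_upV_eq_iff (hm : 3 ≤ m) (hodd : Odd m) (j k : ZMod m) :
    dist (upV m j) (upV m k) = 1 ↔
      (2*((j-k).val)+1 = m ∨ 2*((j-k).val) = m+1) := by
  have h1 := (cos_char m ((j-k).val) hm hodd (ZMod.val_lt _)).1
  have hd := dist_upV_sq m hm j k
  have hp := denom_pos m hm
  constructor
  · intro h
    apply h1.1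
    have : dist (upV m j) (upV m k) ^ 2 = 1 := by rw [h]; norm_num
    rw [hd, div_eq_one_iff_eq hp.ne'] at this
    linarith
  · intro h
    have := h1.2 h
    apply eq_one_of_sq dist_nonneg
    rw [hd, this, sub_neg_eq_add, div_self (denom_pos m hm).ne']

lemma dist_upV_ne_zero (hm : 3 ≤ m) (hodd : Odd m) (j k : ZMod m) (hjk : j ≠ k) : dist (upV m j) (upV m k) ≠ 0 := by
  have hr1 : 1 ≤ (j-k).val := by
    have h0 : (j-k).val ≠ 0 := by
      simpa [ZMod.val_eq_zero] using sub_ne_zero.2 hjk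
    omega
  have h3 := (cos_char m ((j-k).val) hm hodd (ZMod.val_lt _)).2.2 hr1
  have hd := dist_upV_sq m hm j k
  have hp := denom_pos m hm
  intro h
  rw [h] at hd
  have : (0:ℝ) = (1 - Real.cos (2*π*((j-k).val)/m)) / (1 + Real.cos (π/m)) := by
    simpa using hd
  have h4 : 0 < (1 - Real.cos (2*π*((j-k).val)/m)) / (1 + Real.cos (π/m)) :=
    div_pos (by linarith) hp
  linarith

lemma dist_upA_upV (hm : 3 ≤ m) (k : ZMod m) : dist (upA m) (upV m k) = 1 := by
  apply eq_one_of_sq dist_nonneg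
  rw [EuclideanSpace.dist_eq, Real.sq_sqrt (by positivity)]
  simp only [Fin.sum_univ_three, upA, upV, Real.dist_eq, sq_abs, Matrix.cons_val_zero,
    Matrix.cons_val_one, Matrix.head_cons, Matrix.cons_val_two, Matrix.tail_cons, PiLp.toLp_apply]
  have h1 := Real.sin_sq_add_cos_sq (2*π*k.val/m)
  have h2 := upH_sq m hm
  nlinarith [h1, h2]

end Main

open Classical in
/-- Number of ordered pairs of distinct points of `S` at distance exactly `1`
(twice the number of unordered such pairs). -/
noncomputable def unitPairs {d : ℕ} (S : Finset (EuclideanSpace ℝ (Fin d))) : ℕ :=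
  (S.offDiag.filter fun p => dist p.1 p.2 = 1).card

/-- For every even `n ≥ 4` there exist `n` points of diameter 1 on a 2-sphere in ℝ³
with exactly `2n − 2` diameter pairs. -/
theorem stmt_11 (n : ℕ) (hn : 4 ≤ n) (heven : Even n) :
    ∃ (S : Finset (EuclideanSpace ℝ (Fin 3))) (c : EuclideanSpace ℝ (Fin 3)) (r : ℝ),
      S.card = n ∧ (∀ x ∈ S, dist x c = r) ∧
      (∀ x ∈ S, ∀ y ∈ S, dist x y ≤ 1) ∧
      unitPairs S = 2 * (2 * n - 2) := by
  classical
  obtain ⟨l, hl⟩ := heven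
  set m := n - 1 with hmdef
  have hm : 3 ≤ m := by omega
  have hodd : Odd m := ⟨l - 1, by omega⟩
  haveI : NeZero m := ⟨by omega⟩
  set q := upQ m with hq
  set S := Finset.image q Finset.univ with hS
  have hqn : q none = upA m := rfl
  have hqs : ∀ k, q (some k) = upV m k := fun _ => rfl
  have hne : ∀ x y : Option (ZMod m), x ≠ y → dist (q x) (q y) ≠ 0 := by
    intro x y hxy
    match x, y with
    | none, none => simp at hxy
    | none, some k => rw [hqn, hqs, dist_upA_upV m hm]; norm_num
    | some k, none => rw [hqn, hqs, dist_comm, dist_upA_upV m hm]; norm_num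
    | some j, some k =>
        exact dist_upV_ne_zero m hm hodd j k (by simpa using hxy)
  have hinj : Function.Injective q := by
    intro x y h
    by_contra hxy
    exact hne x y hxy (by rw [h, dist_self])
  have hcard : S.card = n := by
    rw [hS, Finset.card_image_of_injective _ hinj, Finset.card_univ]
    simp only [Fintype.card_option, ZMod.card]
    omega
  set z := (upH m ^ 2 - upR m ^ 2)/(2 * upH m) with hzdef
  have hzz : 2 * upH m * z = upH m ^ 2 - upR m ^ 2 := by
    have h0 : (2 * upH m) ≠ 0 := by have := upH_pos m hm; positivity
    rw [hzdef, mul_div_cancel₀ _ h0]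
  refine ⟨S, !₂[0,0,z], Real.sqrt (upR m ^ 2 + z^2), hcard, ?_, ?_, ?_⟩
  · intro x hx
    obtain ⟨i, -, rfl⟩ := Finset.mem_image.1 hx
    match i with
    | some k =>
      rw [hqs, EuclideanSpace.dist_eq]
      congr 1
      simp only [Fin.sum_univ_three, upV, Real.dist_eq, sq_abs, Matrix.cons_val_zero,
        Matrix.cons_val_one, Matrix.head_cons, Matrix.cons_val_two, Matrix.tail_cons, PiLp.toLp_apply]
      nlinarith [Real.sin_sq_add_cos_sq (2*π*k.val/m), sq_nonneg (upR m)]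
    | none =>
      rw [hqn, EuclideanSpace.dist_eq]
      congr 1
      simp only [Fin.sum_univ_three, upA, Real.dist_eq, sq_abs, Matrix.cons_val_zero,
        Matrix.cons_val_one, Matrix.head_cons, Matrix.cons_val_two, Matrix.tail_cons, PiLp.toLp_apply]
      nlinarith [hzz]
  · intro x hx y hy
    obtain ⟨i, -, rfl⟩ := Finset.mem_image.1 hx
    obtain ⟨i', -, rfl⟩ := Finset.mem_image.1 hy
    match i, i' with
    | none, none => rw [dist_self]; norm_num
    | none, some k => rw [hqn, hqs]; exact le_of_eq (dist_upA_upV m hm k)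
    | some k, none =>
        rw [hqn, hqs, dist_comm]; exact le_of_eq (dist_upA_upV m hm k)
    | some j, some k => exact dist_upV_le m hm hodd j k
  · have hs1 : (m-1)/2 < m := by omega
    have hs2 : (m+1)/2 < m := by omega
    have hcne : (((m-1)/2 : ℕ) : ZMod m) ≠ (((m+1)/2 : ℕ) : ZMod m) := by
      intro h
      have := congrArg ZMod.val h
      rw [ZMod.val_cast_of_lt hs1, ZMod.val_cast_of_lt hs2] at this
      rcases hodd with ⟨t, ht⟩; omega
    have key : ∀ j k : ZMod m, dist (upV m j) (upV m k) = 1 ↔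
        (k = j - (((m-1)/2 : ℕ) : ZMod m) ∨ k = j - (((m+1)/2 : ℕ) : ZMod m)) := by
      intro j k
      rw [dist_upV_eq_iff m hm hodd]
      have e1 : (2*((j-k).val)+1 = m) ↔ k = j - (((m-1)/2 : ℕ) : ZMod m) := by
        have : (2*((j-k).val)+1 = m) ↔ (j-k).val = (m-1)/2 := by rcases hodd with ⟨t, ht⟩; omega
        rw [this]
        constructor
        · intro h
          have h2 : j - k = (((m-1)/2 : ℕ) : ZMod m) := by
            rw [← h]; simp [ZMod.natCast_val, ZMod.cast_id]
          linear_combination -h2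
        · intro h
          have h2 : j - k = (((m-1)/2 : ℕ) : ZMod m) := by linear_combination -h
          rw [h2, ZMod.val_cast_of_lt hs1]
      have e2 : (2*((j-k).val) = m+1) ↔ k = j - (((m+1)/2 : ℕ) : ZMod m) := by
        have : (2*((j-k).val) = m+1) ↔ (j-k).val = (m+1)/2 := by rcases hodd with ⟨t, ht⟩; omega
        rw [this]
        constructor
        · intro h
          have h2 : j - k = (((m+1)/2 : ℕ) : ZMod m) := by
            rw [← h]; simp [ZMod.natCast_val, ZMod.cast_id]
          linear_combination -h2
        · intro h
          have h2 : j - k = (((m+1)/2 : ℕ) : ZMod m) := by linear_combination -h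
          rw [h2, ZMod.val_cast_of_lt hs2]
      rw [e1, e2]
    have hfilter : S.offDiag.filter (fun p => dist p.1 p.2 = 1)
        = ((univ ×ˢ univ : Finset (Option (ZMod m) × Option (ZMod m))).filter
            (fun p => dist (q p.1) (q p.2) = 1)).image (fun p => (q p.1, q p.2)) := by
      ext ⟨x, y⟩
      simp only [Finset.mem_filter, Finset.mem_offDiag, Finset.mem_image, Finset.mem_product,
        hS, Finset.mem_univ, true_and, and_true, Prod.ext_iff]
      constructor
      · rintro ⟨⟨⟨i, rfl⟩, ⟨i', rfl⟩, hne'⟩, hd⟩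
        exact ⟨(i, i'), hd, rfl, rfl⟩
      · rintro ⟨⟨i, i'⟩, hd, rfl, rfl⟩
        refine ⟨⟨⟨i, rfl⟩, ⟨i', rfl⟩, ?_⟩, hd⟩
        intro h
        rw [h, dist_self] at hd
        norm_num at hd
    have hpinj : Function.Injective (fun p : Option (ZMod m) × Option (ZMod m) => (q p.1, q p.2)) := by
      rintro ⟨a, b⟩ ⟨c, d⟩ h
      simp only [Prod.ext_iff] at h ⊢
      exact ⟨hinj h.1, hinj h.2⟩
    have hcount : ((univ ×ˢ univ : Finset (Option (ZMod m) × Option (ZMod m))).filter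
        (fun p => dist (q p.1) (q p.2) = 1)).card = 4 * m := by
      rw [Finset.card_filter, Finset.sum_product]
      rw [Fintype.sum_option]
      have hnone : (∑ y : Option (ZMod m), if dist (q none) (q y) = 1 then 1 else 0) = m := by
        rw [Fintype.sum_option]
        rw [dist_self, if_neg (by norm_num)]
        have : ∀ k : ZMod m, (if dist (q none) (q (some k)) = 1 then 1 else 0) = 1 := by
          intro k; rw [hqn, hqs, if_pos (dist_upA_upV m hm k)]
        simp only [this, Finset.sum_const, Finset.card_univ, ZMod.card, smul_eq_mul, mul_one]
        omega
      have hsome : ∀ j : ZMod m,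
          (∑ y : Option (ZMod m), if dist (q (some j)) (q y) = 1 then 1 else 0) = 3 := by
        intro j
        rw [Fintype.sum_option]
        have h1 : dist (q (some j)) (q none) = 1 := by
          rw [hqn, hqs, dist_comm]; exact dist_upA_upV m hm j
        rw [if_pos h1]
        have h2 : (∑ k : ZMod m, if dist (q (some j)) (q (some k)) = 1 then 1 else 0) = 2 := by
          rw [← Finset.card_filter]
          have : (univ.filter fun k : ZMod m => dist (q (some j)) (q (some k)) = 1)
              = {j - (((m-1)/2 : ℕ) : ZMod m), j - (((m+1)/2 : ℕ) : ZMod m)} := by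
            ext k
            simp only [Finset.mem_filter, Finset.mem_univ, true_and, Finset.mem_insert,
              Finset.mem_singleton, hqs]
            exact key j k
          rw [this, Finset.card_insert_of_notMem, Finset.card_singleton]
          simp only [Finset.mem_singleton]
          intro h
          exact hcne (by linear_combination -h)
        omega
      simp only [hsome, hnone, Finset.sum_const, Finset.card_univ, ZMod.card, smul_eq_mul]
      omega
    rw [unitPairs, hfilter, Finset.card_image_of_injective _ hpinj, hcount]
    omega
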